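/- Let G be a group acting freely by isometries on a complete CAT(0) space X, and let g ∈ C(G) ∩ [G,G] be a non-trivial central element which is also a commutator product. Then g cannot be a hyperbolic isometry of X. -/

import Mathlib

open Filter Topology

/-- A map `γ` is a unit-speed geodesic on the interval `[s₀, s₁]`. -/
def UnitSpeedOn {X : Type*} [MetricSpace X] (γ : ℝ → X) (s₀ s₁ : ℝ) : Prop :=
  ∀ s ∈ Set.Icc s₀ s₁, ∀ t ∈ Set.Icc s₀ s₁, dist (γ s) (γ t) = |s - t|

/-- `X` is a CAT(0) space: it is geodesic and satisfies the CN (comparison)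
inequality of Bruhat–Tits. -/
def IsCAT0 (X : Type*) [MetricSpace X] : Prop :=
  (∀ x y : X, ∃ γ : ℝ → X, γ 0 = x ∧ γ (dist x y) = y ∧ UnitSpeedOn γ 0 (dist x y)) ∧
  ∀ x y z m : X, dist y m = dist y z / 2 → dist m z = dist y z / 2 →
    dist x m ^ 2 ≤ (dist x y ^ 2 + dist x z ^ 2) / 2 - dist y z ^ 2 / 4

/-- Busemann-type function along the forward points `σ (n a)` of a geodesic line. -/
noncomputable def bus {X : Type*} [MetricSpace X] (σ : ℝ → X) (a : ℝ) (x : X) : ℝ :=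
  ⨅ n : ℕ, (dist x (σ (n * a)) - n * a)

/-- `σ` is an axis of the isometry `Φ` with translation length `a`. -/
def IsAxisOf {X : Type*} [MetricSpace X] (Φ : X → X) (a : ℝ) (σ : ℝ → X) : Prop :=
  (∀ s t : ℝ, dist (σ s) (σ t) = |s - t|) ∧ ∀ t, Φ (σ t) = σ (t + a)

section BusLemmas

variable {X : Type*} [MetricSpace X] {σ τ υ : ℝ → X} {a : ℝ} {Φ : X → X}

lemma bus_bdd (hσ : ∀ s t : ℝ, dist (σ s) (σ t) = |s - t|) (ha : 0 < a) (x : X) :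
    BddBelow (Set.range fun n : ℕ => dist x (σ (n * a)) - n * a) := by
  refine ⟨-dist x (σ 0), ?_⟩
  rintro y ⟨n, rfl⟩
  have hna : (0:ℝ) ≤ n * a := by positivity
  have h2 : dist (σ 0) (σ (n * a)) = n * a := by
    rw [hσ, zero_sub, abs_neg, abs_of_nonneg hna]
  have h1 := dist_triangle (σ 0) x (σ ((n:ℝ) * a))
  have h3 : dist (σ 0) x = dist x (σ 0) := dist_comm _ _
  show -dist x (σ 0) ≤ dist x (σ ((n:ℝ) * a)) - (n:ℝ) * a
  linarith

lemma bus_antitone (hσ : ∀ s t : ℝ, dist (σ s) (σ t) = |s - t|) (ha : 0 < a) (x : X) :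
    Antitone (fun n : ℕ => dist x (σ (n * a)) - n * a) := by
  refine antitone_nat_of_succ_le fun n => ?_
  have hd : dist (σ ((n:ℝ) * a)) (σ (((n+1 : ℕ):ℝ) * a)) = a := by
    rw [hσ]
    push_cast
    rw [show (n:ℝ)*a - ((n:ℝ)+1)*a = -a by ring, abs_neg, abs_of_nonneg ha.le]
  have h1 := dist_triangle x (σ ((n:ℝ)*a)) (σ (((n+1 : ℕ):ℝ) * a))
  push_cast at *
  linarith

lemma bus_tendsto (hσ : ∀ s t : ℝ, dist (σ s) (σ t) = |s - t|) (ha : 0 < a) (x : X) :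
    Tendsto (fun n : ℕ => dist x (σ (n * a)) - n * a) atTop (𝓝 (bus σ a x)) :=
  tendsto_atTop_ciInf (bus_antitone hσ ha x) (bus_bdd hσ ha x)

lemma bus_le (hσ : ∀ s t : ℝ, dist (σ s) (σ t) = |s - t|) (ha : 0 < a) (x : X) (n : ℕ) :
    bus σ a x ≤ dist x (σ (n * a)) - n * a :=
  ciInf_le (bus_bdd hσ ha x) n

lemma bus_le_add (hσ : ∀ s t : ℝ, dist (σ s) (σ t) = |s - t|) (ha : 0 < a) (x y : X) :
    bus σ a x ≤ dist x y + bus σ a y := by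
  have h : ∀ n : ℕ, bus σ a x - dist x y ≤ dist y (σ (n * a)) - n * a := by
    intro n
    have h1 := bus_le hσ ha x n
    have h2 := dist_triangle x y (σ ((n:ℝ) * a))
    linarith
  have h3 : bus σ a x - dist x y ≤ bus σ a y := by
    rw [bus]; exact le_ciInf h
  linarith

lemma axis_iter (hσ : IsAxisOf Φ a σ) : ∀ (n : ℕ) (t : ℝ), Φ^[n] (σ t) = σ (t + n * a) := by
  intro n
  induction n with
  | zero => simp
  | succ n ih =>
    intro t
    rw [Function.iterate_succ_apply', ih, hσ.2]
    congr 1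
    push_cast
    ring

lemma dist_iter (hΦ : Isometry Φ) :
    ∀ (n : ℕ) (x y : X), dist (Φ^[n] x) (Φ^[n] y) = dist x y := by
  intro n
  induction n with
  | zero => simp
  | succ n ih =>
    intro x y
    rw [Function.iterate_succ_apply', Function.iterate_succ_apply', hΦ.dist_eq, ih]

lemma bus_axis_shift (hΦ : Isometry Φ) (hσ : IsAxisOf Φ a σ) (hτ : IsAxisOf Φ a τ)
    (ha : 0 < a) (m : ℕ) :
    bus σ a (τ (m * a)) = bus σ a (τ 0) - m * a := by
  have key : ∀ n : ℕ, m ≤ n → (dist (τ 0) (σ (((n - m : ℕ):ℝ) * a)) - ((n - m : ℕ):ℝ) * a) - m * a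
      = dist (τ ((m:ℝ) * a)) (σ ((n:ℝ) * a)) - n * a := by
    intro n hmn
    have e1 : τ ((m:ℝ) * a) = Φ^[m] (τ 0) := by rw [axis_iter hτ m 0, zero_add]
    have e2 : σ ((n:ℝ) * a) = Φ^[m] (σ (((n - m : ℕ):ℝ) * a)) := by
      rw [axis_iter hσ m]
      congr 1
      rw [Nat.cast_sub hmn]
      ring
    rw [e1, e2, dist_iter hΦ m]
    rw [Nat.cast_sub hmn]
    ring
  have h1 := bus_tendsto hσ.1 ha (τ ((m:ℝ) * a))
  have h2 : Tendsto (fun n : ℕ =>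
      (dist (τ 0) (σ (((n - m : ℕ):ℝ) * a)) - ((n - m : ℕ):ℝ) * a) - m * a) atTop
      (𝓝 (bus σ a (τ 0) - m * a)) :=
    Tendsto.sub_const ((bus_tendsto hσ.1 ha (τ 0)).comp (tendsto_sub_atTop_nat m)) ((m:ℝ) * a)
  have h2' : Tendsto (fun n : ℕ => dist (τ ((m:ℝ) * a)) (σ ((n:ℝ) * a)) - (n:ℝ) * a) atTop
      (𝓝 (bus σ a (τ 0) - m * a)) :=
    Tendsto.congr' (eventually_atTop.2 ⟨m, fun n hn => key n hn⟩) h2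
  exact tendsto_nhds_unique h1 h2'

lemma bus_self (hσ : ∀ s t : ℝ, dist (σ s) (σ t) = |s - t|) (ha : 0 < a) :
    bus σ a (σ 0) = 0 := by
  have h : ∀ n : ℕ, dist (σ 0) (σ ((n:ℝ) * a)) - (n:ℝ) * a = 0 := by
    intro n
    have hna : (0:ℝ) ≤ n * a := by positivity
    rw [hσ, zero_sub, abs_neg, abs_of_nonneg hna]
    ring
  rw [bus]
  simp only [h]
  exact ciInf_const

lemma o_subadd (hΦ : Isometry Φ) (hσ : IsAxisOf Φ a σ) (hτ : IsAxisOf Φ a τ)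
    (hυ : IsAxisOf Φ a υ) (ha : 0 < a) :
    bus σ a (υ 0) ≤ bus σ a (τ 0) + bus τ a (υ 0) := by
  have key : ∀ m : ℕ, bus σ a (υ 0) ≤ (dist (υ 0) (τ ((m:ℝ) * a)) - m * a) + bus σ a (τ 0) := by
    intro m
    have h1 := bus_le_add hσ.1 ha (υ 0) (τ ((m:ℝ) * a))
    rw [bus_axis_shift hΦ hσ hτ ha m] at h1
    linarith
  have h2 : Tendsto (fun m : ℕ => (dist (υ 0) (τ ((m:ℝ) * a)) - m * a) + bus σ a (τ 0)) atTop
      (𝓝 (bus τ a (υ 0) + bus σ a (τ 0))) :=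
    Tendsto.add_const (bus σ a (τ 0)) (bus_tendsto hτ.1 ha (υ 0))
  linarith [ge_of_tendsto' h2 key]

lemma o_antisymm (hX : IsCAT0 X) (hΦ : Isometry Φ) (hσ : IsAxisOf Φ a σ)
    (hτ : IsAxisOf Φ a τ) (ha : 0 < a) :
    bus σ a (τ 0) + bus τ a (σ 0) ≤ 0 := by
  set c := dist (σ 0) (τ 0) with hc
  have key : ∀ n : ℕ, 1 ≤ n →
      (dist (τ 0) (σ ((n:ℝ) * a)) - (n:ℝ) * a) + (dist (σ 0) (τ ((n:ℝ) * a)) - (n:ℝ) * a)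
        ≤ c ^ 2 / ((n:ℝ) * a) := by
    intro n hn
    set T : ℝ := (n:ℝ) * a with hT
    have hn1 : (1:ℝ) ≤ (n:ℝ) := by exact_mod_cast hn
    have hT0 : 0 < T := by rw [hT]; nlinarith
    set d := dist (σ 0) (τ T) with hd
    have hd0 : (0:ℝ) ≤ d := dist_nonneg
    obtain ⟨ρ, hρ0, hρ1, hρg⟩ := hX.1 (σ 0) (τ T)
    set m := ρ (d / 2) with hm
    have hm1 : dist (σ 0) m = d / 2 := by
      have h := hρg 0 ⟨le_refl 0, hd0⟩ (d / 2) ⟨by linarith, by linarith⟩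
      rw [hρ0] at h
      rw [hm, h, zero_sub, abs_neg, abs_of_nonneg (by linarith)]
    have hm2 : dist m (τ T) = d / 2 := by
      have h := hρg (d / 2) ⟨by linarith, by linarith⟩ d ⟨hd0, le_refl d⟩
      rw [hρ1] at h
      rw [hm, h, show d / 2 - d = -(d/2) by ring, abs_neg, abs_of_nonneg (by linarith)]
    have cn1 := hX.2 (τ 0) (σ 0) (τ T) m (by rw [hm1, ← hd]) (by rw [hm2, ← hd])
    have cn2 := hX.2 (σ T) (σ 0) (τ T) m (by rw [hm1, ← hd]) (by rw [hm2, ← hd])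
    have e1 : dist (τ 0) (τ T) = T := by
      rw [hτ.1, zero_sub, abs_neg, abs_of_nonneg hT0.le]
    have e2 : dist (σ T) (σ 0) = T := by
      rw [hσ.1, sub_zero, abs_of_nonneg hT0.le]
    have e3 : dist (σ T) (τ T) = c := by
      have a1 : σ T = Φ^[n] (σ 0) := by rw [axis_iter hσ n 0, zero_add, hT]
      have a2 : τ T = Φ^[n] (τ 0) := by rw [axis_iter hτ n 0, zero_add, hT]
      rw [a1, a2, dist_iter hΦ n]
    have ecomm : dist (τ 0) (σ 0) = c := by rw [dist_comm]
    rw [ecomm, e1] at cn1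
    rw [e2, e3] at cn2
    have htri := dist_triangle (τ 0) m (σ T)
    have hq : dist m (σ T) = dist (σ T) m := dist_comm _ _
    have hD1 : (0:ℝ) ≤ dist (τ 0) (σ T) := dist_nonneg
    -- derive the squared bound
    have hsq : dist (τ 0) (σ T) ^ 2 ≤ 2 * c ^ 2 + 2 * T ^ 2 - d ^ 2 := by
      nlinarith [sq_nonneg (dist (τ 0) m - dist (σ T) m), dist_nonneg (x := τ 0) (y := m),
        dist_nonneg (x := σ T) (y := m)]
    rw [le_div_iff₀ hT0]
    nlinarith [sq_nonneg (dist (τ 0) (σ T) - T), sq_nonneg (d - T)]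
  have lim : Tendsto (fun n : ℕ =>
      (dist (τ 0) (σ ((n:ℝ) * a)) - (n:ℝ) * a) + (dist (σ 0) (τ ((n:ℝ) * a)) - (n:ℝ) * a)) atTop
      (𝓝 (bus σ a (τ 0) + bus τ a (σ 0))) :=
    (bus_tendsto hσ.1 ha (τ 0)).add (bus_tendsto hτ.1 ha (σ 0))
  have lim0 : Tendsto (fun n : ℕ => c ^ 2 / ((n:ℝ) * a)) atTop (𝓝 0) :=
    tendsto_const_nhds.div_atTop (tendsto_natCast_atTop_atTop.atTop_mul_const ha)
  exact le_of_tendsto_of_tendsto lim lim0 (eventually_atTop.2 ⟨1, key⟩)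

lemma o_nonneg (hΦ : Isometry Φ) (hσ : IsAxisOf Φ a σ) (hτ : IsAxisOf Φ a τ) (ha : 0 < a) :
    0 ≤ bus σ a (τ 0) + bus τ a (σ 0) := by
  have h := o_subadd hΦ hσ hτ hσ ha
  rw [bus_self hσ.1 ha] at h
  linarith

lemma o_cocycle (hX : IsCAT0 X) (hΦ : Isometry Φ) (hσ : IsAxisOf Φ a σ)
    (hτ : IsAxisOf Φ a τ) (hυ : IsAxisOf Φ a υ) (ha : 0 < a) :
    bus σ a (υ 0) = bus σ a (τ 0) + bus τ a (υ 0) := by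
  have h1 := o_subadd hΦ hσ hτ hυ ha
  have h2 := o_subadd hΦ hσ hυ hτ ha
  have h3 := o_antisymm hX hΦ hτ hυ ha
  have h4 := o_nonneg hΦ hτ hυ ha
  linarith

end BusLemmas

/-- If a group acts freely by isometries on a complete CAT(0) space, then a
non-trivial element of the center lying in the commutator subgroup cannot act
as a hyperbolic isometry. -/
theorem stmt_15 {G X : Type*} [Group G] [MetricSpace X] [CompleteSpace X]
    [MulAction G X] (hX : IsCAT0 X)
    (hiso : ∀ g : G, Isometry fun x : X => g • x)
    (hfree : ∀ (g : G) (x : X), g • x = x → g = 1)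
    (g : G) (hg : g ≠ 1) (hgc : g ∈ Subgroup.center G) (hgcomm : g ∈ commutator G) :
    ¬ ∃ (γ : ℝ → X) (a : ℝ), 0 < a ∧ (∀ s t : ℝ, dist (γ s) (γ t) = |s - t|) ∧
      ∀ t : ℝ, g • γ t = γ (t + a) := by
  rintro ⟨γ, a, ha, hγ, hax⟩
  set Φ : X → X := fun x => g • x with hΦdef
  have hΦ : Isometry Φ := hiso g
  have hγax : IsAxisOf Φ a γ := ⟨hγ, hax⟩
  -- each translate by an element of G is again an axis of Φ (as g is central)
  have axis_of : ∀ h : G, IsAxisOf Φ a (fun t => h • γ t) := by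
    intro h
    constructor
    · intro s t
      have hh := (hiso h).dist_eq (γ s) (γ t)
      rw [hh]
      exact hγ s t
    · intro t
      show g • h • γ t = h • γ (t + a)
      rw [smul_smul, ← Subgroup.mem_center_iff.mp hgc h, ← smul_smul, hax t]
  -- equivariance of bus
  have equiv : ∀ (h : G) (σ : ℝ → X) (x : X),
      bus (fun t => h • σ t) a (h • x) = bus σ a x := by
    intro h σ x
    rw [bus, bus]
    congr 1
    funext n
    have hh : dist (h • x) (h • σ ((n:ℝ) * a)) = dist x (σ ((n:ℝ) * a)) :=
      (hiso h).dist_eq x (σ ((n:ℝ) * a))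
    rw [hh]
  -- the homomorphism
  have hom : ∀ h₁ h₂ : G, bus γ a ((h₁ * h₂) • γ 0) = bus γ a (h₁ • γ 0) + bus γ a (h₂ • γ 0) := by
    intro h₁ h₂
    have hτ := axis_of h₁
    have hυ' := axis_of (h₁ * h₂)
    have hυ : IsAxisOf Φ a (fun t => h₁ • h₂ • γ t) := by
      have : (fun t => (h₁ * h₂) • γ t) = (fun t => h₁ • h₂ • γ t) := by
        funext t; rw [mul_smul]
      rw [← this]
      exact hυ'
    have e0 : (h₁ * h₂) • γ 0 = (fun t => h₁ • h₂ • γ t) 0 := by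
      simp only [mul_smul]
    rw [e0]
    have := o_cocycle hX hΦ hγax hτ hυ ha
    rw [this]
    congr 1
    have := equiv h₁ γ (h₂ • γ 0)
    exact this
  have hφg : bus γ a (g • γ 0) = -a := by
    have e0 : g • γ 0 = γ ((1:ℕ) * a) := by
      rw [hax 0, zero_add]; norm_num
    rw [e0, bus_axis_shift hΦ hγax hγax ha 1, bus_self hγ ha]
    norm_num
  -- build the monoid hom to Multiplicative ℝ
  let F : G →* Multiplicative ℝ :=
    MonoidHom.mk' (fun h => Multiplicative.ofAdd (bus γ a (h • γ 0))) (by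
      intro h₁ h₂
      rw [hom h₁ h₂]
      rfl)
  have hker : F g = 1 := Abelianization.commutator_subset_ker F hgcomm
  have : bus γ a (g • γ 0) = 0 := by
    have : Multiplicative.ofAdd (bus γ a (g • γ 0)) = 1 := hker
    exact ofAdd_eq_one.mp this
  rw [hφg] at this
  linarith
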